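/- Let M be a real d×k matrix with columns M_1,…,M_k, let α ∈ (0,1), δ ∈ (0,1/k], σ ≥ 0, and k ≥ 1. Assume Well-Separatedness: for every ℓ, the orthogonal projection of M_ℓ onto the orthogonal complement of span{M_{ℓ'} : ℓ' ≠ ℓ} has norm at least α·max_{ℓ'}|M_{ℓ'}|. Assume Spectrally Bounded Perturbations: σ/√δ ≤ α³·min_ℓ|M_ℓ|/(4500·k⁹). Then for every x ∈ ℝ^k, |Mx| ≥ (1000·k^{8.5}/α²)·(σ/√δ)·|x|; i.e., the k-th (smallest) singular value of M satisfies s_k(M) ≥ 1000·k^{8.5}·σ/(α²·√δ). -/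

import Mathlib

noncomputable def col {d k : ℕ} (M : Matrix (Fin d) (Fin k) ℝ) (ℓ : Fin k) :
    EuclideanSpace ℝ (Fin d) := WithLp.toLp 2 (fun i => M i ℓ)

/-- Norm of the component of `x` orthogonal to the span of the columns `M ℓ'`, `ℓ' ≠ ℓ`. -/
noncomputable def projNullNorm {d k : ℕ} (M : Matrix (Fin d) (Fin k) ℝ) (ℓ : Fin k)
    (x : EuclideanSpace ℝ (Fin d)) : ℝ :=
  ‖(Submodule.orthogonalProjectionOnto ((Submodule.span ℝ {y | ∃ ℓ' : Fin k, ℓ' ≠ ℓ ∧ y = col M ℓ'})ᗮ) x :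
      EuclideanSpace ℝ (Fin d))‖

private lemma toEuclideanLin_eq_sum {d k : ℕ} (M : Matrix (Fin d) (Fin k) ℝ)
    (x : EuclideanSpace ℝ (Fin k)) :
    Matrix.toEuclideanLin M x = ∑ ℓ : Fin k, x ℓ • col M ℓ := by
  have h : ∀ (s : Finset (Fin k)) (i : Fin d),
      (∑ ℓ ∈ s, x ℓ • col M ℓ) i = ∑ ℓ ∈ s, x ℓ * M i ℓ := by
    intro s i
    induction s using Finset.induction with
    | empty => rfl
    | insert _ _ hni ih =>
        rw [Finset.sum_insert hni, Finset.sum_insert hni, ← ih]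
        rfl
  ext i
  simp [Matrix.toEuclideanLin_apply, Matrix.mulVec, dotProduct, h, mul_comm]

/-- The key geometric estimate: `‖Mx‖ ≥ projNullNorm M ℓ (col M ℓ) * |x ℓ|`. -/
private lemma key_lower {d k : ℕ} (M : Matrix (Fin d) (Fin k) ℝ) (ℓ : Fin k)
    (x : EuclideanSpace ℝ (Fin k)) :
    projNullNorm M ℓ (col M ℓ) * |x ℓ| ≤ ‖Matrix.toEuclideanLin M x‖ := by
  set S : Submodule ℝ (EuclideanSpace ℝ (Fin d)) :=
    Submodule.span ℝ {y | ∃ ℓ' : Fin k, ℓ' ≠ ℓ ∧ y = col M ℓ'}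
  set P := Submodule.orthogonalProjectionOnto Sᗮ
  have hP0 : ∀ ℓ' : Fin k, ℓ' ≠ ℓ → P (col M ℓ') = 0 := by
    intro ℓ' hne
    apply Submodule.orthogonalProjectionOnto_apply_of_mem_orthogonal
    exact Submodule.le_orthogonal_orthogonal S
      (Submodule.subset_span ⟨ℓ', hne, rfl⟩)
  have hPMx : P (Matrix.toEuclideanLin M x) = x ℓ • P (col M ℓ) := by
    rw [toEuclideanLin_eq_sum, map_sum]
    rw [Finset.sum_eq_single ℓ]
    · rw [map_smul]
    · intro b _ hb
      rw [map_smul, hP0 b hb, smul_zero]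
    · intro h; exact absurd (Finset.mem_univ ℓ) h
  have h1 : ‖(P (Matrix.toEuclideanLin M x) : EuclideanSpace ℝ (Fin d))‖
      ≤ ‖Matrix.toEuclideanLin M x‖ := by
    calc ‖(P (Matrix.toEuclideanLin M x) : EuclideanSpace ℝ (Fin d))‖
        ≤ ‖P‖ * ‖Matrix.toEuclideanLin M x‖ := by
          have h := P.le_opNorm (Matrix.toEuclideanLin M x)
          calc ‖(P (Matrix.toEuclideanLin M x) : EuclideanSpace ℝ (Fin d))‖
              = ‖P (Matrix.toEuclideanLin M x)‖ := (Submodule.norm_coe _)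
            _ ≤ ‖P‖ * ‖Matrix.toEuclideanLin M x‖ := h
      _ ≤ 1 * ‖Matrix.toEuclideanLin M x‖ :=
          mul_le_mul_of_nonneg_right (Submodule.orthogonalProjectionOnto_norm_le _) (norm_nonneg _)
      _ = ‖Matrix.toEuclideanLin M x‖ := one_mul _
  calc projNullNorm M ℓ (col M ℓ) * |x ℓ|
      = ‖(P (Matrix.toEuclideanLin M x) : EuclideanSpace ℝ (Fin d))‖ := by
        rw [hPMx]
        simp [projNullNorm, norm_smul, P, S, mul_comm, abs_mul, Real.norm_eq_abs]
    _ ≤ ‖Matrix.toEuclideanLin M x‖ := h1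

theorem stmt6 {d k : ℕ} (hk : 1 ≤ k) (M : Matrix (Fin d) (Fin k) ℝ)
    (α δ σ : ℝ) (hα : α ∈ Set.Ioo (0:ℝ) 1) (hδ0 : 0 < δ) (hδk : δ ≤ 1 / k) (hσ : 0 ≤ σ)
    (hWS : ∀ ℓ : Fin k, α * (⨆ ℓ' : Fin k, ‖col M ℓ'‖) ≤ projNullNorm M ℓ (col M ℓ))
    (hSB : σ / Real.sqrt δ ≤ α ^ 3 * (⨅ ℓ : Fin k, ‖col M ℓ‖) / (4500 * (k : ℝ) ^ 9)) :
    ∀ x : EuclideanSpace ℝ (Fin k),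
      (1000 * (k : ℝ) ^ (8.5 : ℝ) / α ^ 2) * (σ / Real.sqrt δ) * ‖x‖
        ≤ ‖Matrix.toEuclideanLin M x‖ := by
  intro x
  obtain ⟨hα0, hα1⟩ := hα
  have hkpos : (0:ℝ) < k := by exact_mod_cast hk
  have hne : Nonempty (Fin k) := ⟨⟨0, hk⟩⟩
  set S : ℝ := ⨆ ℓ' : Fin k, ‖col M ℓ'‖ with hSdef
  set I : ℝ := ⨅ ℓ : Fin k, ‖col M ℓ‖ with hIdef
  have hIS : I ≤ S := by
    have ℓ := Classical.arbitrary (Fin k)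
    exact le_trans (ciInf_le (Finite.bddBelow_range fun ℓ : Fin k => ‖col M ℓ‖) ℓ)
      (le_ciSup (Finite.bddAbove_range fun ℓ : Fin k => ‖col M ℓ‖) ℓ)
  have hI0 : 0 ≤ I := le_ciInf fun ℓ => norm_nonneg _
  -- pick the index with the largest |x ℓ|
  obtain ⟨ℓ₀, hℓ₀⟩ := Finite.exists_max (fun ℓ : Fin k => |x ℓ|)
  set m : ℝ := |x ℓ₀| with hm
  have hm0 : 0 ≤ m := abs_nonneg _
  -- ‖x‖ ≤ √k * m
  have hxk : ‖x‖ ≤ Real.sqrt k * m := by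
    rw [EuclideanSpace.norm_eq]
    have h1 : ∑ i : Fin k, ‖x i‖ ^ 2 ≤ ∑ _i : Fin k, m ^ 2 := by
      apply Finset.sum_le_sum
      intro i _
      have := hℓ₀ i
      have h2 : ‖x i‖ = |x i| := rfl
      nlinarith [abs_nonneg (x i)]
    calc Real.sqrt (∑ i : Fin k, ‖x i‖ ^ 2) ≤ Real.sqrt (∑ _i : Fin k, m ^ 2) :=
          Real.sqrt_le_sqrt h1
      _ = Real.sqrt ((k : ℝ) * m ^ 2) := by rw [Finset.sum_const]; norm_num [mul_comm]
      _ = Real.sqrt k * m := by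
          rw [Real.sqrt_mul (le_of_lt hkpos), Real.sqrt_sq hm0]
  -- ‖Mx‖ ≥ α * S * m
  have hMx : α * S * m ≤ ‖Matrix.toEuclideanLin M x‖ :=
    le_trans (mul_le_mul_of_nonneg_right (hWS ℓ₀) hm0) (key_lower M ℓ₀ x)
  -- arithmetic: (1000 k^8.5/α²)(σ/√δ) √k ≤ (2/9) α I ≤ α S
  have hk85 : (k : ℝ) ^ (8.5:ℝ) * Real.sqrt k = (k : ℝ) ^ 9 := by
    rw [Real.sqrt_eq_rpow, ← Real.rpow_natCast (k:ℝ) 9, ← Real.rpow_add hkpos]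
    norm_num
  have hC0 : 0 ≤ 1000 * (k : ℝ) ^ (8.5:ℝ) / α ^ 2 := by
    positivity
  have hstep : (1000 * (k : ℝ) ^ (8.5:ℝ) / α ^ 2) * (σ / Real.sqrt δ) * Real.sqrt k
      ≤ (2/9) * α * I := by
    have h1 : (1000 * (k : ℝ) ^ (8.5:ℝ) / α ^ 2) * (σ / Real.sqrt δ) * Real.sqrt k
        ≤ (1000 * (k : ℝ) ^ (8.5:ℝ) / α ^ 2) * (α ^ 3 * I / (4500 * (k : ℝ) ^ 9))
          * Real.sqrt k := by
      apply mul_le_mul_of_nonneg_right _ (Real.sqrt_nonneg _)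
      exact mul_le_mul_of_nonneg_left hSB hC0
    refine h1.trans (le_of_eq ?_)
    have hα2 : α ^ 2 ≠ 0 := by positivity
    have hk9 : (k : ℝ) ^ 9 ≠ 0 := by positivity
    have hsk : Real.sqrt (k:ℝ) ≠ 0 := by positivity
    rw [← hk85]
    field_simp
    ring
  calc (1000 * (k : ℝ) ^ (8.5:ℝ) / α ^ 2) * (σ / Real.sqrt δ) * ‖x‖
      ≤ (1000 * (k : ℝ) ^ (8.5:ℝ) / α ^ 2) * (σ / Real.sqrt δ) * (Real.sqrt k * m) := by
        apply mul_le_mul_of_nonneg_left hxk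
        have hσδ : 0 ≤ σ / Real.sqrt δ := by positivity
        positivity
    _ = (1000 * (k : ℝ) ^ (8.5:ℝ) / α ^ 2) * (σ / Real.sqrt δ) * Real.sqrt k * m := by ring
    _ ≤ (2/9) * α * I * m := mul_le_mul_of_nonneg_right hstep hm0
    _ ≤ α * S * m := by
        nlinarith [mul_nonneg (mul_nonneg hα0.le hI0) hm0,
          mul_le_mul_of_nonneg_right (mul_le_mul_of_nonneg_left hIS hα0.le) hm0]
    _ ≤ ‖Matrix.toEuclideanLin M x‖ := hMx
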